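/- Let U be an open subset of the half-plane {(ρ,z) ∈ ℝ² : ρ > 0} and let σ, ω : U → ℝ be twice continuously differentiable functions satisfying the reduced vacuum Einstein equations Δσ = −e^{−2σ}(ω_ρ² + ω_z²)/ρ⁴ and Δω = 4ω_ρ/ρ + 2(ω_ρσ_ρ + ω_zσ_z) on U. Set η = ρ²e^σ and define G(ρ,z) = (ρ/(4η²))(η_ρ² − η_z² + ω_ρ² − ω_z²) and H(ρ,z) = (ρ/(2η²))(η_ρη_z + ω_ρω_z). Then the 1-form G dρ + H dz is closed on U, i.e. ∂_z G = ∂_ρ H at every point of U. -/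

import Mathlib

/-- Partial derivative with respect to the first (ρ) variable. -/
noncomputable def pdr (f : ℝ × ℝ → ℝ) (p : ℝ × ℝ) : ℝ :=
  deriv (fun x => f (x, p.2)) p.1

/-- Partial derivative with respect to the second (z) variable. -/
noncomputable def pdz (f : ℝ × ℝ → ℝ) (p : ℝ × ℝ) : ℝ :=
  deriv (fun y => f (p.1, y)) p.2

/-- The flat cylindrically symmetric Laplacian Δ = ∂²_ρ + (1/ρ)∂_ρ + ∂²_z. -/
noncomputable def lap (f : ℝ × ℝ → ℝ) (p : ℝ × ℝ) : ℝ :=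
  pdr (pdr f) p + pdr f p / p.1 + pdz (pdz f) p

lemma hasDerivAt_pdr_of_diff {f : ℝ × ℝ → ℝ} {p : ℝ × ℝ} (h : DifferentiableAt ℝ f p) :
    HasDerivAt (fun x => f (x, p.2)) (pdr f p) p.1 := by
  have h1 : DifferentiableAt ℝ (fun x : ℝ => f (x, p.2)) p.1 := by
    have := h.comp p.1 ((differentiableAt_id.prodMk (differentiableAt_const p.2)) :
      DifferentiableAt ℝ (fun x : ℝ => (x, p.2)) p.1)
    exact this
  simpa [pdr] using h1.hasDerivAt

lemma hasDerivAt_pdz_of_diff {f : ℝ × ℝ → ℝ} {p : ℝ × ℝ} (h : DifferentiableAt ℝ f p) :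
    HasDerivAt (fun y => f (p.1, y)) (pdz f p) p.2 := by
  have h1 : DifferentiableAt ℝ (fun y : ℝ => f (p.1, y)) p.2 := by
    have := h.comp p.2 (((differentiableAt_const p.1).prodMk differentiableAt_id) :
      DifferentiableAt ℝ (fun y : ℝ => (p.1, y)) p.2)
    exact this
  simpa [pdz] using h1.hasDerivAt

lemma pdr_eq_fderiv {f : ℝ × ℝ → ℝ} {p : ℝ × ℝ} (h : DifferentiableAt ℝ f p) :
    pdr f p = fderiv ℝ f p (1, 0) := by
  have hl : HasDerivAt (fun x : ℝ => (x, p.2)) ((1 : ℝ), (0 : ℝ)) p.1 :=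
    (hasDerivAt_id p.1).prodMk (hasDerivAt_const p.1 p.2)
  exact (h.hasFDerivAt.comp_hasDerivAt p.1 (by simpa using hl)).deriv

lemma pdz_eq_fderiv {f : ℝ × ℝ → ℝ} {p : ℝ × ℝ} (h : DifferentiableAt ℝ f p) :
    pdz f p = fderiv ℝ f p (0, 1) := by
  have hl : HasDerivAt (fun y : ℝ => (p.1, y)) ((0 : ℝ), (1 : ℝ)) p.2 :=
    (hasDerivAt_const p.2 p.1).prodMk (hasDerivAt_id p.2)
  exact (h.hasFDerivAt.comp_hasDerivAt p.2 (by simpa using hl)).deriv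

lemma secondPartials {U : Set (ℝ × ℝ)} (hU : IsOpen U) {f : ℝ × ℝ → ℝ}
    (hf : ContDiffOn ℝ 2 f U) {p : ℝ × ℝ} (hp : p ∈ U) :
    DifferentiableAt ℝ (pdr f) p ∧ DifferentiableAt ℝ (pdz f) p ∧
      pdz (pdr f) p = pdr (pdz f) p := by
  have hfd : ∀ q ∈ U, DifferentiableAt ℝ f q := fun q hq =>
    (hf.differentiableOn (by norm_num)).differentiableAt (hU.mem_nhds hq)
  have hF : ContDiffOn ℝ 1 (fun q => fderiv ℝ f q) U :=
    hf.fderiv_of_isOpen hU (by norm_num)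
  have hFd : DifferentiableAt ℝ (fun q => fderiv ℝ f q) p :=
    (hF.differentiableOn one_ne_zero).differentiableAt (hU.mem_nhds hp)
  have hev_r : pdr f =ᶠ[nhds p] fun q => fderiv ℝ f q (1, 0) :=
    Filter.eventually_of_mem (hU.mem_nhds hp) fun q hq => pdr_eq_fderiv (hfd q hq)
  have hev_z : pdz f =ᶠ[nhds p] fun q => fderiv ℝ f q (0, 1) :=
    Filter.eventually_of_mem (hU.mem_nhds hp) fun q hq => pdz_eq_fderiv (hfd q hq)
  have hd1 : DifferentiableAt ℝ (fun q => fderiv ℝ f q (1, 0)) p :=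
    hFd.clm_apply (differentiableAt_const _)
  have hd2 : DifferentiableAt ℝ (fun q => fderiv ℝ f q (0, 1)) p :=
    hFd.clm_apply (differentiableAt_const _)
  have hdr : DifferentiableAt ℝ (pdr f) p := hd1.congr_of_eventuallyEq hev_r
  have hdz : DifferentiableAt ℝ (pdz f) p := hd2.congr_of_eventuallyEq hev_z
  refine ⟨hdr, hdz, ?_⟩
  have hsymm : IsSymmSndFDerivAt ℝ f p :=
    (hf.contDiffAt (hU.mem_nhds hp)).isSymmSndFDerivAt (by norm_num)
  have e1 : pdz (pdr f) p = fderiv ℝ (fun q => fderiv ℝ f q (1, 0)) p (0, 1) := by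
    rw [pdz_eq_fderiv hdr, hev_r.fderiv_eq]
  have e2 : pdr (pdz f) p = fderiv ℝ (fun q => fderiv ℝ f q (0, 1)) p (1, 0) := by
    rw [pdr_eq_fderiv hdz, hev_z.fderiv_eq]
  rw [e1, e2, fderiv_clm_apply hFd (differentiableAt_const _),
    fderiv_clm_apply hFd (differentiableAt_const _)]
  simp [hsymm (1, 0) (0, 1)]

/-- for a C² solution (σ, ω) of the reduced vacuum Einstein equations
on an open subset of the half-plane {ρ > 0}, the 1-form G dρ + H dz defining the
conformal factor function γ is closed: ∂_z G = ∂_ρ H. -/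
theorem closedness_of_gamma_oneform
    (U : Set (ℝ × ℝ)) (hU : IsOpen U) (hUpos : ∀ p ∈ U, 0 < p.1)
    (σ ω : ℝ × ℝ → ℝ)
    (hσ : ContDiffOn ℝ 2 σ U) (hω : ContDiffOn ℝ 2 ω U)
    (heqσ : ∀ p ∈ U, lap σ p =
      - Real.exp (-2 * σ p) * ((pdr ω p) ^ 2 + (pdz ω p) ^ 2) / p.1 ^ 4)
    (heqω : ∀ p ∈ U, lap ω p =
      4 * pdr ω p / p.1 + 2 * (pdr ω p * pdr σ p + pdz ω p * pdz σ p))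
    (η G H : ℝ × ℝ → ℝ)
    (hη : ∀ p, η p = p.1 ^ 2 * Real.exp (σ p))
    (hG : ∀ p, G p = p.1 / (4 * (η p) ^ 2)
        * ((pdr η p) ^ 2 - (pdz η p) ^ 2 + (pdr ω p) ^ 2 - (pdz ω p) ^ 2))
    (hH : ∀ p, H p = p.1 / (2 * (η p) ^ 2) * (pdr η p * pdz η p + pdr ω p * pdz ω p)) :
    ∀ p ∈ U, pdz G p = pdr H p := by
  have hσd : ∀ q ∈ U, DifferentiableAt ℝ σ q := fun q hq =>
    (hσ.differentiableOn (by norm_num)).differentiableAt (hU.mem_nhds hq)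
  have hωd : ∀ q ∈ U, DifferentiableAt ℝ ω q := fun q hq =>
    (hω.differentiableOn (by norm_num)).differentiableAt (hU.mem_nhds hq)
  -- G and H in terms of σ, ω partials, on U
  have hGeq : ∀ q ∈ U, G q = q.1/4 * ((2/q.1 + pdr σ q)^2 - (pdz σ q)^2)
      + Real.exp (-2*σ q)/(4*q.1^3) * ((pdr ω q)^2 - (pdz ω q)^2) := by
    rintro ⟨u, v⟩ hq
    have hx0 : u ≠ 0 := (hUpos (u, v) hq).ne'
    have hsr : HasDerivAt (fun t => σ (t, v)) (pdr σ (u, v)) u :=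
      hasDerivAt_pdr_of_diff (hσd (u, v) hq)
    have hsz : HasDerivAt (fun t => σ (u, t)) (pdz σ (u, v)) v :=
      hasDerivAt_pdz_of_diff (hσd (u, v) hq)
    have hηr : pdr η (u, v)
        = 2*u * Real.exp (σ (u, v)) + u^2 * (Real.exp (σ (u, v)) * pdr σ (u, v)) := by
      have h1 := (hasDerivAt_pow 2 u).mul hsr.exp
      have h2 : pdr η (u, v) = deriv (fun t : ℝ => t^2 * Real.exp (σ (t, v))) u := by
        unfold pdr; congr 1; funext t; simpa using hη (t, v)
      rw [h2]; exact h1.deriv.trans (by push_cast; ring)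
    have hηz : pdz η (u, v) = u^2 * (Real.exp (σ (u, v)) * pdz σ (u, v)) := by
      have h1 := hsz.exp.const_mul (u^2)
      have h2 : pdz η (u, v) = deriv (fun t : ℝ => u^2 * Real.exp (σ (u, t))) v := by
        unfold pdz; congr 1; funext t; simpa using hη (u, t)
      rw [h2, h1.deriv]
    have hexp : Real.exp (-2 * σ (u, v))
        = (Real.exp (σ (u, v)))⁻¹ * (Real.exp (σ (u, v)))⁻¹ := by
      rw [← Real.exp_neg, ← Real.exp_add]; congr 1; ring
    have hE : Real.exp (σ (u, v)) ≠ 0 := Real.exp_ne_zero _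
    rw [hG (u, v), hη (u, v), hηr, hηz]
    show u / (4 * (u ^ 2 * Real.exp (σ (u, v))) ^ 2) * _ = _
    rw [hexp]
    field_simp
    ring
  have hHeq : ∀ q ∈ U, H q = q.1/2 * ((2/q.1 + pdr σ q) * pdz σ q)
      + Real.exp (-2*σ q)/(2*q.1^3) * (pdr ω q * pdz ω q) := by
    rintro ⟨u, v⟩ hq
    have hx0 : u ≠ 0 := (hUpos (u, v) hq).ne'
    have hsr : HasDerivAt (fun t => σ (t, v)) (pdr σ (u, v)) u :=
      hasDerivAt_pdr_of_diff (hσd (u, v) hq)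
    have hsz : HasDerivAt (fun t => σ (u, t)) (pdz σ (u, v)) v :=
      hasDerivAt_pdz_of_diff (hσd (u, v) hq)
    have hηr : pdr η (u, v)
        = 2*u * Real.exp (σ (u, v)) + u^2 * (Real.exp (σ (u, v)) * pdr σ (u, v)) := by
      have h1 := (hasDerivAt_pow 2 u).mul hsr.exp
      have h2 : pdr η (u, v) = deriv (fun t : ℝ => t^2 * Real.exp (σ (t, v))) u := by
        unfold pdr; congr 1; funext t; simpa using hη (t, v)
      rw [h2]; exact h1.deriv.trans (by push_cast; ring)
    have hηz : pdz η (u, v) = u^2 * (Real.exp (σ (u, v)) * pdz σ (u, v)) := by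
      have h1 := hsz.exp.const_mul (u^2)
      have h2 : pdz η (u, v) = deriv (fun t : ℝ => u^2 * Real.exp (σ (u, t))) v := by
        unfold pdz; congr 1; funext t; simpa using hη (u, t)
      rw [h2, h1.deriv]
    have hexp : Real.exp (-2 * σ (u, v))
        = (Real.exp (σ (u, v)))⁻¹ * (Real.exp (σ (u, v)))⁻¹ := by
      rw [← Real.exp_neg, ← Real.exp_add]; congr 1; ring
    have hE : Real.exp (σ (u, v)) ≠ 0 := Real.exp_ne_zero _
    rw [hH (u, v), hη (u, v), hηr, hηz]
    show u / (2 * (u ^ 2 * Real.exp (σ (u, v))) ^ 2) * _ = _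
    rw [hexp]
    field_simp
  rintro ⟨x, y⟩ hp
  have hρ : (0:ℝ) < x := hUpos (x, y) hp
  have hx0 : x ≠ 0 := hρ.ne'
  obtain ⟨hσr_d, hσz_d, hσ_cl⟩ := secondPartials hU hσ hp
  obtain ⟨hωr_d, hωz_d, hω_cl⟩ := secondPartials hU hω hp
  -- eventual equality along the two lines
  have hnbz : ∀ᶠ z in nhds y, (x, z) ∈ U := by
    have hc : ContinuousAt (fun z : ℝ => (x, z)) y :=
      (continuous_const.prodMk continuous_id).continuousAt
    exact hc.preimage_mem_nhds (hU.mem_nhds hp)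
  have hnbr : ∀ᶠ r in nhds x, (r, y) ∈ U := by
    have hc : ContinuousAt (fun r : ℝ => (r, y)) x :=
      (continuous_id.prodMk continuous_const).continuousAt
    exact hc.preimage_mem_nhds (hU.mem_nhds hp)
  have hev_z : (fun z => G (x, z)) =ᶠ[nhds y] (fun z =>
      x/4 * ((2/x + pdr σ (x, z))^2 - (pdz σ (x, z))^2)
      + Real.exp (-2*σ (x, z))/(4*x^3) * ((pdr ω (x, z))^2 - (pdz ω (x, z))^2)) :=
    hnbz.mono fun z hz => hGeq (x, z) hz
  have hev_r : (fun r => H (r, y)) =ᶠ[nhds x] (fun r =>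
      r/2 * ((2/r + pdr σ (r, y)) * pdz σ (r, y))
      + Real.exp (-2*σ (r, y))/(2*r^3) * (pdr ω (r, y) * pdz ω (r, y))) :=
    hnbr.mono fun r hr => hHeq (r, y) hr
  -- derivative computations
  have hb := hasDerivAt_pdz_of_diff (hσd (x, y) hp)
  have hsrz := hasDerivAt_pdz_of_diff hσr_d
  have hszz := hasDerivAt_pdz_of_diff hσz_d
  have hwrz := hasDerivAt_pdz_of_diff hωr_d
  have hwzz := hasDerivAt_pdz_of_diff hωz_d
  have hDz := ((((hsrz.const_add (2/x)).pow 2).sub (hszz.pow 2)).const_mul (x/4)).add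
      ((((hb.const_mul (-2)).exp).div_const (4*x^3)).mul ((hwrz.pow 2).sub (hwzz.pow 2)))
  have hb' := hasDerivAt_pdr_of_diff (hσd (x, y) hp)
  have hsrr := hasDerivAt_pdr_of_diff hσr_d
  have hszr := hasDerivAt_pdr_of_diff hσz_d
  have hwrr := hasDerivAt_pdr_of_diff hωr_d
  have hwzr := hasDerivAt_pdr_of_diff hωz_d
  have h2x := (hasDerivAt_const x (2:ℝ)).div (hasDerivAt_id x) hx0
  have hden := (hasDerivAt_pow 3 x).const_mul (2:ℝ)
  have hDr := (((hasDerivAt_id x).div_const 2).mul ((h2x.add hsrr).mul hszr)).add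
      ((((hb'.const_mul (-2)).exp).div hden (by positivity)).mul (hwrr.mul hwzr))
  have egz := hev_z.deriv_eq.trans hDz.deriv
  have egr := hev_r.deriv_eq.trans hDr.deriv
  show deriv (fun z => G (x, z)) y = deriv (fun r => H (r, y)) x
  rw [egz, egr]
  -- the PDE relations
  have R1 : pdr (pdr σ) (x, y) + pdr σ (x, y) / x + pdz (pdz σ) (x, y)
      = - Real.exp (-2 * σ (x, y)) * ((pdr ω (x, y))^2 + (pdz ω (x, y))^2) / x^4 :=
    heqσ (x, y) hp
  have R2 : pdr (pdr ω) (x, y) + pdr ω (x, y) / x + pdz (pdz ω) (x, y)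
      = 4 * pdr ω (x, y) / x
        + 2 * (pdr ω (x, y) * pdr σ (x, y) + pdz ω (x, y) * pdz σ (x, y)) :=
    heqω (x, y) hp
  have hazz : pdz (pdz σ) (x, y)
      = - Real.exp (-2 * σ (x, y)) * ((pdr ω (x, y))^2 + (pdz ω (x, y))^2) / x^4
        - pdr (pdr σ) (x, y) - pdr σ (x, y) / x := by linarith
  have hczz : pdz (pdz ω) (x, y)
      = 4 * pdr ω (x, y) / x
        + 2 * (pdr ω (x, y) * pdr σ (x, y) + pdz ω (x, y) * pdz σ (x, y))
        - pdr (pdr ω) (x, y) - pdr ω (x, y) / x := by linarith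
  rw [hazz, hczz, hσ_cl, hω_cl]
  simp only [Pi.mul_apply, Pi.div_apply, Pi.add_apply, Pi.sub_apply, Pi.pow_apply, id]
  field_simp
  have hxi : x * x⁻¹ = 1 := mul_inv_cancel₀ hx0
  linear_combination (8*x^6*pdr (pdz σ) (x, y) + 4*x^7*pdr σ (x, y)*pdr (pdz σ) (x, y)) * hxi
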